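/- Let X, Y be independent flat sources on {0,1}^n with min-entropies k₁, k₂, and suppose there is a (classical, deterministic) strategy where Alice sends b₁ bits depending on x, Bob sends b₂ bits depending on y, and a referee guesses x·y correctly with probability 1/2 + ε over X, Y. If k₁ + k₂ − min(b₁,b₂) < n, then there exist such sources and a strategy achieving ε = 1/2 (exact computation). -/

import Mathlib

open scoped Kronecker ComplexOrder
open Matrix BigOperators

/-- Schatten-1 norm `‖A‖₁ = Tr √(AᴴA)`. -/
noncomputable def trNorm {n m : Type*} [Fintype n] [Fintype m] [DecidableEq m] (A : Matrix n m ℂ) : ℝ :=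
  (((Matrix.posSemidef_conjTranspose_mul_self A).1.eigenvectorUnitary.1 *
      diagonal (fun i => ((√((Matrix.posSemidef_conjTranspose_mul_self A).1.eigenvalues i) : ℝ) : ℂ)) *
      (star (Matrix.posSemidef_conjTranspose_mul_self A).1.eigenvectorUnitary : Matrix m m ℂ)).trace).re

/-- Trace distance `(1/2)‖A − B‖₁`. -/
noncomputable def trDist {n : Type*} [Fintype n] [DecidableEq n] (A B : Matrix n n ℂ) : ℝ :=
  (1/2) * trNorm (A - B)

/-- `ρ` is a density matrix. -/
def IsDensity {n : Type*} [Fintype n] (ρ : Matrix n n ℂ) : Prop :=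
  ρ.PosSemidef ∧ ρ.trace = 1

/-- if `k₁ + k₂ − min(b₁,b₂) < n` there are flat sources with min-entropies
`k₁, k₂` and a deterministic SMP strategy (with `b₁`, `b₂` bits of communication) computing
`x·y` exactly on the supports of the sources. -/
theorem stmt17 (n k₁ k₂ b₁ b₂ : ℕ) (hk₁ : k₁ ≤ n) (hk₂ : k₂ ≤ n)
    (h : k₁ + k₂ < n + min b₁ b₂) :
    ∃ (A B : Finset (Fin n → ZMod 2)) (fA : (Fin n → ZMod 2) → Fin (2^b₁))
      (fB : (Fin n → ZMod 2) → Fin (2^b₂)) (ref : Fin (2^b₁) → Fin (2^b₂) → ZMod 2),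
      A.card = 2^k₁ ∧ B.card = 2^k₂ ∧
      ∀ x ∈ A, ∀ y ∈ B, ref (fA x) (fB y) = x ⬝ᵥ y := by
  classical
  set S : Finset (Fin n) := Finset.univ.filter (fun i => (i:ℕ) < k₁ ∧ n - k₂ ≤ (i:ℕ)) with hS
  have hmemS : ∀ i : Fin n, i ∈ S ↔ ((i:ℕ) < k₁ ∧ n - k₂ ≤ (i:ℕ)) := by
    intro i; simp [hS]
  have hcardS : S.card ≤ min b₁ b₂ := by
    have hle := Finset.card_le_card_of_injOn (f := fun i : Fin n => (i:ℕ) - (n - k₂))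
      (s := S) (t := Finset.range (min b₁ b₂)) ?_ ?_
    · simpa using hle
    · intro i hi
      rw [Finset.mem_coe, hmemS] at hi
      rw [Finset.mem_coe, Finset.mem_range]
      dsimp only
      omega
    · intro a ha b hb hab
      rw [Finset.mem_coe, hmemS] at ha hb
      simp only at hab
      exact Fin.ext (by omega)
  have hm1 : S.card ≤ b₁ := le_trans hcardS (min_le_left _ _)
  have hm2 : S.card ≤ b₂ := le_trans hcardS (min_le_right _ _)
  have hcard : Fintype.card (↥S → ZMod 2) = 2 ^ S.card := by
    simp [Fintype.card_fun, Fintype.card_coe]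
  let E : (↥S → ZMod 2) ≃ Fin (2 ^ S.card) := Fintype.equivFinOfCardEq hcard
  let e₁ : (Fin k₁ → ZMod 2) → (Fin n → ZMod 2) := fun g i =>
    if h : (i:ℕ) < k₁ then g ⟨(i:ℕ), h⟩ else 0
  let e₂ : (Fin k₂ → ZMod 2) → (Fin n → ZMod 2) := fun g i =>
    if h : n - k₂ ≤ (i:ℕ) then g ⟨(i:ℕ) - (n - k₂), by have := i.isLt; omega⟩ else 0
  have he₁ : Function.Injective e₁ := by
    intro g g' hgg
    funext j
    have := congrFun hgg ⟨(j:ℕ), lt_of_lt_of_le j.isLt hk₁⟩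
    simpa [e₁, j.isLt] using this
  have he₂ : Function.Injective e₂ := by
    intro g g' hgg
    funext j
    have hj : (j:ℕ) + (n - k₂) < n := by have := j.isLt; omega
    have := congrFun hgg ⟨(j:ℕ) + (n - k₂), hj⟩
    simp only [e₂] at this
    rw [dif_pos (by omega), dif_pos (by omega)] at this
    simpa using this
  refine ⟨Finset.univ.image e₁, Finset.univ.image e₂,
    fun x => Fin.castLE (Nat.pow_le_pow_right (by norm_num) hm1)
      (E (fun i => x i.1)),
    fun y => Fin.castLE (Nat.pow_le_pow_right (by norm_num) hm2)
      (E (fun i => y i.1)),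
    fun c₁ c₂ =>
      if h₁ : (c₁:ℕ) < 2 ^ S.card then
        if h₂ : (c₂:ℕ) < 2 ^ S.card then
          ∑ i : ↥S, (E.symm ⟨(c₁:ℕ), h₁⟩ i) * (E.symm ⟨(c₂:ℕ), h₂⟩ i)
        else 0
      else 0,
    ?_, ?_, ?_⟩
  · rw [Finset.card_image_of_injective _ he₁]; simp
  · rw [Finset.card_image_of_injective _ he₂]; simp
  · intro x hx y hy
    obtain ⟨g₁, -, rfl⟩ := Finset.mem_image.mp hx
    obtain ⟨g₂, -, rfl⟩ := Finset.mem_image.mp hy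
    dsimp only
    set u : ↥S → ZMod 2 := fun i => e₁ g₁ i.1 with hu
    set v : ↥S → ZMod 2 := fun i => e₂ g₂ i.1 with hv
    rw [dif_pos (show ((Fin.castLE (Nat.pow_le_pow_right (by norm_num) hm1) (E u) : Fin (2^b₁)) : ℕ) < 2 ^ S.card from (E u).isLt),
        dif_pos (show ((Fin.castLE (Nat.pow_le_pow_right (by norm_num) hm2) (E v) : Fin (2^b₂)) : ℕ) < 2 ^ S.card from (E v).isLt)]
    have hEu : E.symm ⟨((Fin.castLE (Nat.pow_le_pow_right (by norm_num) hm1) (E u) : Fin (2^b₁)) : ℕ), (E u).isLt⟩ = u := by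
      have h' : (⟨((Fin.castLE (Nat.pow_le_pow_right (by norm_num) hm1) (E u) : Fin (2^b₁)) : ℕ), (E u).isLt⟩ : Fin (2 ^ S.card)) = E u :=
        Fin.ext rfl
      rw [h', Equiv.symm_apply_apply]
    have hEv : E.symm ⟨((Fin.castLE (Nat.pow_le_pow_right (by norm_num) hm2) (E v) : Fin (2^b₂)) : ℕ), (E v).isLt⟩ = v := by
      have h' : (⟨((Fin.castLE (Nat.pow_le_pow_right (by norm_num) hm2) (E v) : Fin (2^b₂)) : ℕ), (E v).isLt⟩ : Fin (2 ^ S.card)) = E v :=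
        Fin.ext rfl
      rw [h', Equiv.symm_apply_apply]
    rw [hEu, hEv]
    have hsum : ∑ i : ↥S, u i * v i = ∑ i ∈ S, e₁ g₁ i * e₂ g₂ i := by
      rw [← Finset.sum_attach S (fun i => e₁ g₁ i * e₂ g₂ i)]
      rfl
    rw [hsum, dotProduct]
    apply Finset.sum_subset (Finset.subset_univ S)
    intro i _ hiS
    rw [hmemS] at hiS
    push_neg at hiS
    by_cases hik : (i:ℕ) < k₁
    · have hz : e₂ g₂ i = 0 := by
        have hnle : ¬ (n - k₂ ≤ (i:ℕ)) := fun hle => absurd hle (by omega)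
        simp only [e₂]
        rw [dif_neg hnle]
      simp [hz]
    · have hz : e₁ g₁ i = 0 := by simp [e₁, hik]
      simp [hz]
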